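/- In the down-up algebra A(α,β,0) = K⟨u,d⟩/(d²u - αdud - βud², du² - αudu - βu²d), setting w_l = β·u·d + r_l·d·u where r_l is a root of t² - αt - β, the relations w_l·u = r_l·u·w_l and d·w_l = r_l·w_l·d hold. -/

import Mathlib

noncomputable section

open FreeAlgebra

/-- The defining relations of the down-up algebra `A(α,β,γ)`:
generator `0` is `u`, generator `1` is `d`. -/
inductive DownUpRel (K : Type) [Field K] (α β γ : K) :
    FreeAlgebra K (Fin 2) → FreeAlgebra K (Fin 2) → Prop
  | rel1 : DownUpRel K α β γ
      (ι K 1 * ι K 1 * ι K 0)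
      (α • (ι K 1 * ι K 0 * ι K 1) + β • (ι K 0 * ι K 1 * ι K 1) + γ • ι K 1)
  | rel2 : DownUpRel K α β γ
      (ι K 1 * ι K 0 * ι K 0)
      (α • (ι K 0 * ι K 1 * ι K 0) + β • (ι K 0 * ι K 0 * ι K 1) + γ • ι K 0)

/-- The down-up algebra `A(α,β,γ)` of Benkart–Roby. -/
abbrev DownUp (K : Type) [Field K] (α β γ : K) : Type :=
  RingQuot (DownUpRel K α β γ)

/-- The generator `u` of the down-up algebra. -/
def DownUp.u (K : Type) [Field K] (α β γ : K) : DownUp K α β γ :=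
  RingQuot.mkAlgHom K _ (ι K 0)

/-- The generator `d` of the down-up algebra. -/
def DownUp.d (K : Type) [Field K] (α β γ : K) : DownUp K α β γ :=
  RingQuot.mkAlgHom K _ (ι K 1)

/-- In `A(α,β,0)`, with `r₁, r₂` the roots of `t² - αt - β` and
`w_l = β·u·d + r_l·d·u`, the relations `w_l·u = r_l·u·w_l` and
`d·w_l = r_l·w_l·d` hold for `l = 1, 2`. -/
theorem downUp_w_relations (K : Type) [Field K] [CharZero K] (α β r₁ r₂ : K)
    (hsum : α = r₁ + r₂) (hprod : β = -(r₁ * r₂)) :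
    let u := DownUp.u K α β 0
    let d := DownUp.d K α β 0
    let w₁ := β • (u * d) + r₁ • (d * u)
    let w₂ := β • (u * d) + r₂ • (d * u)
    (w₁ * u = r₁ • (u * w₁) ∧ d * w₁ = r₁ • (w₁ * d)) ∧
    (w₂ * u = r₂ • (u * w₂) ∧ d * w₂ = r₂ • (w₂ * d)) := by
  intro u d w₁ w₂
  have h1 : d * d * u = α • (d * u * d) + β • (u * d * d) := by
    have := RingQuot.mkAlgHom_rel K (DownUpRel.rel1 (K := K) (α := α) (β := β) (γ := 0))
    simpa [u, d, DownUp.u, DownUp.d, map_mul, map_add, map_smul] using this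
  have h2 : d * u * u = α • (u * d * u) + β • (u * u * d) := by
    have := RingQuot.mkAlgHom_rel K (DownUpRel.rel2 (K := K) (α := α) (β := β) (γ := 0))
    simpa [u, d, DownUp.u, DownUp.d, map_mul, map_add, map_smul] using this
  have key : ∀ r : K, r * r = α * r + β →
      ((β • (u * d) + r • (d * u)) * u = r • (u * (β • (u * d) + r • (d * u))) ∧
        d * (β • (u * d) + r • (d * u)) = r • ((β • (u * d) + r • (d * u)) * d)) := by
    intro r hr
    constructor
    · have : (β • (u * d) + r • (d * u)) * u = β • (u * d * u) + r • (d * u * u) := by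
        simp [add_mul, smul_mul_assoc, mul_assoc]
      rw [this, h2]
      simp only [mul_assoc, mul_add, add_mul, mul_smul_comm, smul_mul_assoc, smul_add, smul_smul]
      match_scalars <;> first | linear_combination -hr | linear_combination (-2 : K) * hr | ring1
    · have : d * (β • (u * d) + r • (d * u)) = β • (d * u * d) + r • (d * d * u) := by
        simp [mul_add, mul_smul_comm, mul_assoc]
      rw [this, h1]
      simp only [mul_assoc, mul_add, add_mul, mul_smul_comm, smul_mul_assoc, smul_add, smul_smul]
      match_scalars <;> first | linear_combination -hr | linear_combination (-2 : K) * hr | ring1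
  have hr1 : r₁ * r₁ = α * r₁ + β := by rw [hsum, hprod]; ring
  have hr2 : r₂ * r₂ = α * r₂ + β := by rw [hsum, hprod]; ring
  exact ⟨key r₁ hr1, key r₂ hr2⟩
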